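/- Every labeled graph containing three vertices a < b < c with a adjacent to b, b adjacent to c, and a non-adjacent to c (i.e., an induced copy of I_3 in reduced form) is not 12-representable. -/
import Mathlib


/-- Some occurrence of `i` comes strictly before some occurrence of `j` in `w`. -/
def Occ {n : ℕ} (w : List (Fin n)) (i j : Fin n) : Prop :=
  ∃ p q : Fin w.length, p < q ∧ w.get p = i ∧ w.get q = j

/-- The word `w` over `[n]` 12-represents the labeled graph `G` on `Fin n`:
every letter occurs at least once, and for `i < j`, `i` and `j` are adjacent
iff no occurrence of `i` comes before any occurrence of `j`. -/
def Represents {n : ℕ} (G : SimpleGraph (Fin n)) (w : List (Fin n)) : Prop :=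
  (∀ v : Fin n, v ∈ w) ∧ ∀ i j : Fin n, i < j → (G.Adj i j ↔ ¬ Occ w i j)

/-- `b` is a bad vertex of `G`. -/
def Bad {n : ℕ} (G : SimpleGraph (Fin n)) (b : Fin n) : Prop :=
  ∃ a c : Fin n, a < b ∧ b < c ∧ ¬ G.Adj a b ∧ ¬ G.Adj b c ∧ G.Adj a c

theorem stmt9 (n : ℕ) (G : SimpleGraph (Fin n)) (a b c : Fin n)
    (hab : a < b) (hbc : b < c)
    (e1 : G.Adj a b) (e2 : G.Adj b c) (e3 : ¬ G.Adj a c) :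
    ¬ ∃ w : List (Fin n), Represents G w := by
  rintro ⟨w, hmem, hiff⟩
  have hOab : ¬ Occ w a b := (hiff a b hab).mp e1
  have hObc : ¬ Occ w b c := (hiff b c hbc).mp e2
  have hOac : Occ w a c := by
    by_contra h
    exact e3 ((hiff a c (hab.trans hbc)).mpr h)
  obtain ⟨p, q, hpq, hp, hq⟩ := hOac
  obtain ⟨r, hr⟩ := List.mem_iff_get.mp (hmem b)
  rcases lt_trichotomy r q with h | h | h
  · exact hObc ⟨r, q, h, hr, hq⟩
  · subst h
    exact absurd (hr.symm.trans hq) hbc.ne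
  · exact hOab ⟨p, r, hpq.trans h, hp, hr⟩
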